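/- Let (Ω, 𝒜, ℙ) be a probability space, let 𝒴 and 𝒳ₚ be finite nonempty sets, and let Y : Ω → 𝒴, Ỹ : Ω → 𝒴, Xₚ : Ω → 𝒳ₚ be measurable maps. Suppose: (i) Y and Xₚ are independent, i.e., ℙ(Y = y ∩ Xₚ = xₚ) = ℙ(Y = y)·ℙ(Xₚ = xₚ) for all y ∈ 𝒴, xₚ ∈ 𝒳ₚ; and (ii) Ỹ and Xₚ are conditionally independent given Y, i.e., ℙ(Ỹ = ỹ ∩ Xₚ = xₚ ∩ Y = y)·ℙ(Y = y) = ℙ(Ỹ = ỹ ∩ Y = y)·ℙ(Xₚ = xₚ ∩ Y = y) for all ỹ, y ∈ 𝒴, xₚ ∈ 𝒳ₚ. Then Ỹ and Xₚ are independent: ℙ(Ỹ = ỹ ∩ Xₚ = xₚ) = ℙ(Ỹ = ỹ)·ℙ(Xₚ = xₚ) for all ỹ ∈ 𝒴 and xₚ ∈ 𝒳ₚ. -/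

import Mathlib

open MeasureTheory

/-- Measure-theoretic restatement of Proposition 1 of the paper: if the true label
`Y` is independent of the protected attribute `Xp`, and the learned prediction `Yt`
is conditionally independent of `Xp` given `Y` (stated in the product form avoiding
division), then `Yt` is independent of `Xp`. -/
theorem indep_of_condIndep
    {Ω 𝒴 𝒳p : Type*} [MeasurableSpace Ω]
    [Fintype 𝒴] [Nonempty 𝒴] [MeasurableSpace 𝒴] [MeasurableSingletonClass 𝒴]
    [Fintype 𝒳p] [Nonempty 𝒳p] [MeasurableSpace 𝒳p] [MeasurableSingletonClass 𝒳p]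
    (μ : Measure Ω) [IsProbabilityMeasure μ]
    (Y Yt : Ω → 𝒴) (Xp : Ω → 𝒳p)
    (hY : Measurable Y) (hYt : Measurable Yt) (hXp : Measurable Xp)
    -- (i) Y and Xp are independent
    (h1 : ∀ (y : 𝒴) (xp : 𝒳p),
      μ ({ω | Y ω = y} ∩ {ω | Xp ω = xp}) = μ {ω | Y ω = y} * μ {ω | Xp ω = xp})
    -- (ii) Yt and Xp are conditionally independent given Y
    (h2 : ∀ (yt y : 𝒴) (xp : 𝒳p),
      μ ({ω | Yt ω = yt} ∩ {ω | Xp ω = xp} ∩ {ω | Y ω = y}) * μ {ω | Y ω = y}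
        = μ ({ω | Yt ω = yt} ∩ {ω | Y ω = y}) * μ ({ω | Xp ω = xp} ∩ {ω | Y ω = y})) :
    -- conclusion: Yt and Xp are independent
    ∀ (yt : 𝒴) (xp : 𝒳p),
      μ ({ω | Yt ω = yt} ∩ {ω | Xp ω = xp}) = μ {ω | Yt ω = yt} * μ {ω | Xp ω = xp} := by
  intro yt xp
  have hpart : ∀ s : Set Ω, MeasurableSet s → μ s = ∑ y : 𝒴, μ (s ∩ {ω | Y ω = y}) := by
    intro s hs
    have hu : s = ⋃ y, s ∩ {ω | Y ω = y} := by
      ext ω; simp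
    have hdisj : Pairwise (Function.onFun Disjoint fun y => s ∩ {ω | Y ω = y}) := by
      intro a b hab
      simp only [Function.onFun, Set.disjoint_left]
      rintro ω ⟨_, ha⟩ ⟨_, hb⟩
      exact hab (ha ▸ hb ▸ rfl)
    have hm : ∀ y : 𝒴, MeasurableSet (s ∩ {ω | Y ω = y}) :=
      fun y => hs.inter (hY (measurableSet_singleton y))
    conv_lhs => rw [hu]
    rw [measure_iUnion hdisj hm, tsum_fintype]
  have key : ∀ y : 𝒴,
      μ ({ω | Yt ω = yt} ∩ {ω | Xp ω = xp} ∩ {ω | Y ω = y})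
        = μ ({ω | Yt ω = yt} ∩ {ω | Y ω = y}) * μ {ω | Xp ω = xp} := by
    intro y
    by_cases hy : μ {ω | Y ω = y} = 0
    · have l1 : μ ({ω | Yt ω = yt} ∩ {ω | Xp ω = xp} ∩ {ω | Y ω = y}) = 0 :=
        le_antisymm (le_trans (measure_mono Set.inter_subset_right) hy.le) zero_le
      have l2 : μ ({ω | Yt ω = yt} ∩ {ω | Y ω = y}) = 0 :=
        le_antisymm (le_trans (measure_mono Set.inter_subset_right) hy.le) zero_le
      rw [l1, l2, zero_mul]
    · have hXy : μ ({ω | Xp ω = xp} ∩ {ω | Y ω = y}) = μ {ω | Xp ω = xp} * μ {ω | Y ω = y} := by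
        rw [Set.inter_comm, h1, mul_comm]
      have h2' := h2 yt y xp
      rw [hXy] at h2'
      have hfin : μ {ω | Y ω = y} ≠ ⊤ := measure_ne_top μ _
      calc μ ({ω | Yt ω = yt} ∩ {ω | Xp ω = xp} ∩ {ω | Y ω = y})
          = μ ({ω | Yt ω = yt} ∩ {ω | Xp ω = xp} ∩ {ω | Y ω = y}) * μ {ω | Y ω = y}
              * (μ {ω | Y ω = y})⁻¹ := by
            rw [mul_assoc, ENNReal.mul_inv_cancel hy hfin, mul_one]
        _ = μ ({ω | Yt ω = yt} ∩ {ω | Y ω = y}) * μ {ω | Xp ω = xp} * μ {ω | Y ω = y}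
              * (μ {ω | Y ω = y})⁻¹ := by rw [h2']; ring
        _ = μ ({ω | Yt ω = yt} ∩ {ω | Y ω = y}) * μ {ω | Xp ω = xp} := by
            rw [mul_assoc, ENNReal.mul_inv_cancel hy hfin, mul_one]
  calc μ ({ω | Yt ω = yt} ∩ {ω | Xp ω = xp})
      = ∑ y : 𝒴, μ ({ω | Yt ω = yt} ∩ {ω | Xp ω = xp} ∩ {ω | Y ω = y}) :=
        hpart _ ((hYt (measurableSet_singleton yt)).inter (hXp (measurableSet_singleton xp)))
    _ = ∑ y : 𝒴, μ ({ω | Yt ω = yt} ∩ {ω | Y ω = y}) * μ {ω | Xp ω = xp} := by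
        simp only [key]
    _ = (∑ y : 𝒴, μ ({ω | Yt ω = yt} ∩ {ω | Y ω = y})) * μ {ω | Xp ω = xp} := by
        rw [Finset.sum_mul]
    _ = μ {ω | Yt ω = yt} * μ {ω | Xp ω = xp} := by
        rw [← hpart {ω | Yt ω = yt} (hYt (measurableSet_singleton yt))]
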